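/- Let x | z=0 ~ N(μ₀, σ²) and x | z=1 ~ N(μ₁, σ²), and consider threshold classifiers accepting group z iff x ≥ τ_z. Fix effort budget δ > 0. If the classifier satisfies equal improvability, i.e. Φ((τ₀-δ-μ₀)/σ)/Φ((τ₀-μ₀)/σ) = Φ((τ₁-δ-μ₁)/σ)/Φ((τ₁-μ₁)/σ), then τ₀ - μ₀ = τ₁ - μ₁. -/

import Mathlib

/-- Standard normal PDF. -/
noncomputable def stdPdf (x : ℝ) : ℝ := Real.exp (-(x ^ 2) / 2) / Real.sqrt (2 * Real.pi)

/-- Standard normal CDF. -/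
noncomputable def stdCdf (x : ℝ) : ℝ := ∫ t in Set.Iic x, stdPdf t

open MeasureTheory Set Real

lemma stdPdf_pos (x : ℝ) : 0 < stdPdf x :=
  div_pos (exp_pos _) (Real.sqrt_pos.2 (by positivity))

lemma continuous_stdPdf : Continuous stdPdf := by unfold stdPdf; fun_prop

lemma integrable_stdPdf : Integrable stdPdf := by
  have h := (integrable_exp_neg_mul_sq (by norm_num : (0:ℝ) < 1/2)).div_const
      (Real.sqrt (2 * Real.pi))
  convert h using 2 with x
  unfold stdPdf
  ring_nf

lemma stdCdf_shift (a c : ℝ) : stdCdf (a - c) = ∫ t in Iic a, stdPdf (t - c) := by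
  have h := (measurePreserving_sub_right volume c).setIntegral_preimage_emb
      ((MeasurableEquiv.subRight c).measurableEmbedding) stdPdf (Iic (a - c))
  have hpre : (fun x : ℝ => x - c) ⁻¹' Iic (a - c) = Iic a := by
    ext x; simp [sub_le_sub_iff_right]
  rw [stdCdf, ← h, hpre]

lemma stdPdf_sub (t c : ℝ) : stdPdf (t - c) = stdPdf t * Real.exp (c * t - c ^ 2 / 2) := by
  unfold stdPdf
  rw [div_mul_eq_mul_div, ← Real.exp_add]
  ring_nf

lemma stdCdf_pos (x : ℝ) : 0 < stdCdf x := by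
  rw [stdCdf, setIntegral_pos_iff_support_of_nonneg_ae]
  · have : Function.support stdPdf = univ := by
      ext t; simp [Function.mem_support, (stdPdf_pos t).ne']
    rw [this, univ_inter, Real.volume_Iic]
    exact ENNReal.zero_lt_top
  · exact Filter.Eventually.of_forall fun t => (stdPdf_pos t).le
  · exact integrable_stdPdf.integrableOn

lemma integrable_shift (c : ℝ) : Integrable (fun t : ℝ => stdPdf (t - c)) :=
  integrable_stdPdf.comp_sub_right c

lemma key_ineq {c : ℝ} (hc : 0 < c) (a : ℝ) :
    stdPdf a * stdCdf (a - c) < stdPdf (a - c) * stdCdf a := by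
  have hint : IntegrableOn (fun t : ℝ => stdPdf t * (Real.exp (c * a) - Real.exp (c * t)))
      (Iic a) := by
    have h1 : Integrable (fun t : ℝ => stdPdf t * Real.exp (c * t)) := by
      have := (integrable_shift c).const_mul (Real.exp (c ^ 2 / 2))
      convert this using 2 with t
      rw [stdPdf_sub, ← mul_assoc, mul_comm (Real.exp _), mul_assoc, ← Real.exp_add]
      ring_nf
    exact ((integrable_stdPdf.mul_const (Real.exp (c * a))).sub h1).integrableOn.congr_fun
      (fun t _ => by simp only [Pi.sub_apply]; ring) measurableSet_Iic
  have hpos : 0 < ∫ t in Iic a, stdPdf t * (Real.exp (c * a) - Real.exp (c * t)) := by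
    rw [setIntegral_pos_iff_support_of_nonneg_ae]
    · have hsub : Iio a ⊆ Function.support
          (fun t => stdPdf t * (Real.exp (c * a) - Real.exp (c * t))) ∩ Iic a := by
        intro t ht
        refine ⟨?_, mem_Iic.2 (le_of_lt (mem_Iio.1 ht))⟩
        have : Real.exp (c * t) < Real.exp (c * a) :=
          Real.exp_lt_exp.2 (by nlinarith [mem_Iio.1 ht])
        exact mul_ne_zero (stdPdf_pos t).ne' (by linarith)
      calc (0:ENNReal) < volume (Iio a) := by rw [Real.volume_Iio]; exact ENNReal.zero_lt_top
        _ ≤ _ := measure_mono hsub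
    · filter_upwards [ae_restrict_mem measurableSet_Iic] with t ht
      have : Real.exp (c * t) ≤ Real.exp (c * a) :=
        Real.exp_le_exp.2 (by nlinarith [mem_Iic.1 ht])
      exact mul_nonneg (stdPdf_pos t).le (by linarith)
    · exact hint
  have hsplit : (∫ t in Iic a, stdPdf t * (Real.exp (c * a) - Real.exp (c * t)))
      = Real.exp (c * a) * stdCdf a - ∫ t in Iic a, stdPdf t * Real.exp (c * t) := by
    have h1 : Integrable (fun t : ℝ => stdPdf t * Real.exp (c * t)) := by
      have := (integrable_shift c).const_mul (Real.exp (c ^ 2 / 2))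
      convert this using 2 with t
      rw [stdPdf_sub, ← mul_assoc, mul_comm (Real.exp _), mul_assoc, ← Real.exp_add]
      ring_nf
    rw [stdCdf, ← integral_const_mul]
    rw [← integral_sub ((integrable_stdPdf.const_mul _).integrableOn) h1.integrableOn]
    congr 1 with t
    ring
  have hshift : stdCdf (a - c) = Real.exp (-(c ^ 2 / 2)) * ∫ t in Iic a,
      stdPdf t * Real.exp (c * t) := by
    rw [stdCdf_shift, ← integral_const_mul]
    congr 1 with t
    rw [stdPdf_sub, ← mul_assoc, mul_comm (Real.exp _), mul_assoc, ← Real.exp_add]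
    ring_nf
  have hpa : stdPdf (a - c) = stdPdf a * Real.exp (c * a - c ^ 2 / 2) := stdPdf_sub a c
  have hE : Real.exp (c * a - c ^ 2 / 2) = Real.exp (c * a) * Real.exp (-(c ^ 2 / 2)) := by
    rw [← Real.exp_add]; ring_nf
  have hpdfa := stdPdf_pos a
  have hEpos := Real.exp_pos (-(c ^ 2 / 2))
  rw [hshift, hpa, hE]
  nlinarith [hpos, hsplit, mul_pos hpdfa hEpos]

lemma hasDerivAt_stdCdf (x : ℝ) : HasDerivAt stdCdf (stdPdf x) x := by
  have heq : ∀ y, stdCdf y = stdCdf 0 + ∫ t in (0:ℝ)..y, stdPdf t := by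
    intro y
    rw [← intervalIntegral.integral_Iic_sub_Iic integrable_stdPdf.integrableOn
      integrable_stdPdf.integrableOn]
    unfold stdCdf; ring
  have h : HasDerivAt (fun y => stdCdf 0 + ∫ t in (0:ℝ)..y, stdPdf t) (stdPdf x) x := by
    refine HasDerivAt.const_add _ ?_
    exact intervalIntegral.integral_hasDerivAt_right
      (integrable_stdPdf.intervalIntegrable)
      (continuous_stdPdf.stronglyMeasurableAtFilter _ _)
      continuous_stdPdf.continuousAt
  exact h.congr_of_eventuallyEq (Filter.Eventually.of_forall fun y => (heq y))

lemma strictMono_ratio {c : ℝ} (hc : 0 < c) :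
    StrictMono (fun a => stdCdf (a - c) / stdCdf a) := by
  apply strictMono_of_deriv_pos
  intro a
  have hnum : HasDerivAt (fun a => stdCdf (a - c)) (stdPdf (a - c)) a := by
    have := (hasDerivAt_stdCdf (a - c)).comp a ((hasDerivAt_id a).sub_const c)
    simpa [Function.comp_def] using this
  have hd : HasDerivAt (fun a => stdCdf (a - c) / stdCdf a)
      ((stdPdf (a - c) * stdCdf a - stdCdf (a - c) * stdPdf a) / (stdCdf a) ^ 2) a :=
    hnum.div (hasDerivAt_stdCdf a) (stdCdf_pos a).ne'
  rw [hd.deriv]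
  have h1 := key_ineq hc a
  have h2 := stdCdf_pos a
  apply div_pos (by nlinarith) (by positivity)

/-- For two Gaussian groups with common variance, Equal Improvability with budget δ
forces equal margins τ₀ - μ₀ = τ₁ - μ₁. -/
theorem ei_implies_equal_margins (μ₀ μ₁ σ δ τ₀ τ₁ : ℝ) (hσ : 0 < σ) (hδ : 0 < δ)
    (hEI : stdCdf ((τ₀ - δ - μ₀) / σ) / stdCdf ((τ₀ - μ₀) / σ)
         = stdCdf ((τ₁ - δ - μ₁) / σ) / stdCdf ((τ₁ - μ₁) / σ)) :
    τ₀ - μ₀ = τ₁ - μ₁ := by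
  have hc : 0 < δ / σ := div_pos hδ hσ
  have h0 : (τ₀ - δ - μ₀) / σ = (τ₀ - μ₀) / σ - δ / σ := by ring
  have h1 : (τ₁ - δ - μ₁) / σ = (τ₁ - μ₁) / σ - δ / σ := by ring
  rw [h0, h1] at hEI
  have := (strictMono_ratio hc).injective hEI
  field_simp at this
  linarith
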